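/- Let X be a complete metric space and let A ⊂ X be a nonempty subset. Then A is externally 4-hyperconvex in X if and only if A is externally n-hyperconvex in X for every positive integer n. -/

import Mathlib

/-- A subset `A` of a metric space `X` is externally `n`-hyperconvex in `X` if for every
family of `n` closed balls `B(x i, r i)` with `d(x i, A) ≤ r i` and
`d(x i, x j) ≤ r i + r j`, the intersection `A ∩ ⋂ i, B(x i, r i)` is nonempty. -/
def IsExternallyNHyperconvex {X : Type*} [MetricSpace X] (A : Set X) (n : ℕ) : Prop :=
  ∀ (x : Fin n → X) (r : Fin n → ℝ),
    (∀ i, Metric.infDist (x i) A ≤ r i) →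
    (∀ i j, dist (x i) (x j) ≤ r i + r j) →
    (A ∩ ⋂ i, Metric.closedBall (x i) (r i)).Nonempty

namespace ExtHCAux

variable {X : Type*} [MetricSpace X] {A : Set X}

lemma hc_mono {n m : ℕ} (h : IsExternallyNHyperconvex A n) (hm : 0 < m) (hmn : m ≤ n) :
    IsExternallyNHyperconvex A m := by
  intro x r hr hx
  set idx : Fin n → Fin m := fun i => if h' : (i : ℕ) < m then ⟨i, h'⟩ else ⟨0, hm⟩ with hidx
  obtain ⟨a, haA, hab⟩ := h (fun i => x (idx i)) (fun i => r (idx i))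
    (fun i => hr _) (fun i j => hx _ _)
  refine ⟨a, haA, Set.mem_iInter.2 fun j => ?_⟩
  have hj : idx ⟨(j : ℕ), lt_of_lt_of_le j.2 hmn⟩ = j := by
    simp only [hidx]
    rw [dif_pos j.2]
  have := Set.mem_iInter.1 hab ⟨(j : ℕ), lt_of_lt_of_le j.2 hmn⟩
  rwa [hj] at this

lemma hc_closed {n : ℕ} (hn : 0 < n) (h : IsExternallyNHyperconvex A n) : IsClosed A := by
  refine isClosed_of_closure_subset fun y hy => ?_
  have h0 : Metric.infDist y A = 0 := by
    rw [← Metric.infDist_closure]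
    exact Metric.infDist_zero_of_mem hy
  obtain ⟨a, haA, hab⟩ := h (fun _ => y) (fun _ => 0)
    (fun i => by simp [h0]) (fun i j => by simp)
  have hmem := Set.mem_iInter.1 hab ⟨0, hn⟩
  rw [Metric.mem_closedBall] at hmem
  have : a = y := dist_le_zero.1 hmem
  exact this ▸ haA

lemma move {n m : ℕ} (hA : IsExternallyNHyperconvex A n)
    (x : Fin m → X) (r : Fin m → ℝ)
    (hr : ∀ i, Metric.infDist (x i) A ≤ r i)
    (hx : ∀ i j, dist (x i) (x j) ≤ r i + r j)
    {a : X} (ha : a ∈ A) (D e : Fin m → ℝ)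
    (hD : ∀ i, dist a (x i) ≤ r i + D i)
    (he : ∀ i, 0 ≤ e i)
    {ρ : ℝ} (hρ : 0 ≤ ρ)
    (C : Finset (Fin m)) (hC : C.card < n)
    (hCe : ∀ i ∈ C, D i ≤ ρ + e i) :
    ∃ b ∈ A, dist b a ≤ ρ ∧ ∀ i ∈ C, dist b (x i) ≤ r i + e i := by
  classical
  set k := C.card with hk
  set g : Fin k ≃o {y // y ∈ C} := C.orderIsoOfFin hk.symm with hg
  set F : Fin n → X := fun i => if h' : (i : ℕ) < k then x (g ⟨i, h'⟩) else a with hF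
  set S : Fin n → ℝ := fun i =>
    if h' : (i : ℕ) < k then r (g ⟨i, h'⟩) + e (g ⟨i, h'⟩) else ρ with hS
  have hmem : ∀ j : Fin k, ((g j : Fin m)) ∈ C := fun j => (g j).2
  have hdist2 : ∀ c ∈ C, dist a (x c) ≤ ρ + (r c + e c) := by
    intro c hc
    have h1 := hCe c hc
    have h2 := hD c
    linarith
  have hinf : ∀ i, Metric.infDist (F i) A ≤ S i := by
    intro i
    by_cases h' : (i : ℕ) < k
    · simp only [hF, hS]
      rw [dif_pos h', dif_pos h']
      exact le_trans (hr _) (le_add_of_nonneg_right (he _))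
    · simp only [hF, hS]
      rw [dif_neg h', dif_neg h', Metric.infDist_zero_of_mem ha]
      exact hρ
  have hpair : ∀ i j, dist (F i) (F j) ≤ S i + S j := by
    intro i j
    by_cases hi : (i : ℕ) < k <;> by_cases hj : (j : ℕ) < k <;> simp only [hF, hS]
    · rw [dif_pos hi, dif_pos hj, dif_pos hi, dif_pos hj]
      have h1 := hx (g ⟨i, hi⟩) (g ⟨j, hj⟩)
      have e1 := he ((g ⟨i, hi⟩ : {y // y ∈ C}) : Fin m)
      have e2 := he ((g ⟨j, hj⟩ : {y // y ∈ C}) : Fin m)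
      linarith
    · rw [dif_pos hi, dif_neg hj, dif_pos hi, dif_neg hj, dist_comm]
      have := hdist2 _ (hmem ⟨i, hi⟩)
      linarith
    · rw [dif_neg hi, dif_pos hj, dif_neg hi, dif_pos hj]
      have := hdist2 _ (hmem ⟨j, hj⟩)
      linarith
    · rw [dif_neg hi, dif_neg hj, dif_neg hi, dif_neg hj, dist_self]
      linarith
  obtain ⟨b, hbA, hb⟩ := hA F S hinf hpair
  have hba : dist b a ≤ ρ := by
    have hmem0 := Set.mem_iInter.1 hb ⟨k, hC⟩
    rw [Metric.mem_closedBall] at hmem0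
    have hF0 : F ⟨k, hC⟩ = a := by simp only [hF]; rw [dif_neg (lt_irrefl k)]
    have hS0 : S ⟨k, hC⟩ = ρ := by simp only [hS]; rw [dif_neg (lt_irrefl k)]
    rwa [hF0, hS0] at hmem0
  refine ⟨b, hbA, hba, fun c hc => ?_⟩
  obtain ⟨j, hjc⟩ := g.toEquiv.surjective ⟨c, hc⟩
  have hjk : (j : ℕ) < k := j.2
  have hmemj := Set.mem_iInter.1 hb ⟨(j : ℕ), lt_trans hjk hC⟩
  rw [Metric.mem_closedBall] at hmemj
  have hFj : F ⟨(j : ℕ), lt_trans hjk hC⟩ = x c := by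
    simp only [hF]
    rw [dif_pos hjk]
    congr 1
    rw [Fin.eta, show g j = ⟨c, hc⟩ from hjc]
  have hSj : S ⟨(j : ℕ), lt_trans hjk hC⟩ = r c + e c := by
    simp only [hS]
    rw [dif_pos hjk]
    rw [Fin.eta, show g j = ⟨c, hc⟩ from hjc]
  rwa [hFj, hSj] at hmemj

lemma round {n m : ℕ} (hA : IsExternallyNHyperconvex A n)
    (x : Fin m → X) (r : Fin m → ℝ)
    (hr : ∀ i, Metric.infDist (x i) A ≤ r i)
    (hx : ∀ i j, dist (x i) (x j) ≤ r i + r j)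
    (hmn : m ≤ n + 1) (hn : 1 ≤ n)
    (p q u v w : Fin m) (hpq : p ≠ q)
    (hup : u ≠ p) (huq : u ≠ q) (huw : u ≠ w) (huv : u ≠ v)
    (hvp : v ≠ p) (hvq : v ≠ q) (hvw : v ≠ w)
    (hwp : w ≠ p) (hwq : w ≠ q)
    {s : ℝ} (hs : 0 ≤ s) {a : X} (ha : a ∈ A)
    (hSt : ∀ i, dist a (x i) ≤ r i + (if i = p ∨ i = q then s else 0)) :
    ∃ b ∈ A, dist b a ≤ 2 * s ∧
      ∀ i, dist b (x i) ≤ r i + (if i = u ∨ i = v then s / 2 else 0) := by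
  classical
  have hs2 : 0 ≤ s / 2 := by linarith
  have hcard : ∀ α β : Fin m, α ≠ β → (({α, β} : Finset (Fin m))ᶜ).card < n := by
    intro α β hab
    rw [Finset.card_compl, Finset.card_pair hab]
    simp only [Fintype.card_fin]
    omega
  have hmemc : ∀ (α β i : Fin m), i ∈ ({α, β} : Finset (Fin m))ᶜ ↔ ¬(i = α ∨ i = β) := by
    intro α β i
    simp [Finset.mem_compl]
  -- Move 1 : unchosen pair {u, w}
  obtain ⟨b₁, hb₁A, hb₁a, hb₁C⟩ := move hA x r hr hx ha
    (fun i => if i = p ∨ i = q then s else 0)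
    (fun i => if i = p ∨ i = q then s / 2 else 0)
    hSt (fun i => by split_ifs <;> linarith) hs2
    (({u, w} : Finset (Fin m))ᶜ) (hcard u w huw)
    (fun i _ => by split_ifs <;> linarith)
  have hD₁ : ∀ i, dist b₁ (x i) ≤ r i +
      (if i = p ∨ i = q ∨ i = u ∨ i = w then s / 2 else 0) := by
    intro i
    by_cases hiC : i ∈ ({u, w} : Finset (Fin m))ᶜ
    · have h1 := hb₁C i hiC
      by_cases hpq' : i = p ∨ i = q
      · rw [if_pos hpq'] at h1
        rw [if_pos (by tauto)]
        exact h1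
      · rw [if_neg hpq'] at h1
        split_ifs <;> linarith
    · have hio : i = u ∨ i = w := by
        by_contra hcon
        exact hiC ((hmemc u w i).2 hcon)
      have hnotpq : ¬(i = p ∨ i = q) := by
        rcases hio with h | h <;> subst h <;> simp [hup, huq, hwp, hwq]
      have h2 := hSt i
      rw [if_neg hnotpq] at h2
      rw [if_pos (by tauto)]
      calc dist b₁ (x i) ≤ dist b₁ a + dist a (x i) := dist_triangle _ _ _
        _ ≤ s / 2 + (r i + 0) := by linarith
        _ = r i + s / 2 := by ring
  -- Move 2 : unchosen pair {v, w}
  obtain ⟨b₂, hb₂A, hb₂b₁, hb₂C⟩ := move hA x r hr hx hb₁A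
    (fun i => if i = p ∨ i = q ∨ i = u ∨ i = w then s / 2 else 0)
    (fun _ => 0) hD₁ (fun _ => le_refl 0) hs2
    (({v, w} : Finset (Fin m))ᶜ) (hcard v w hvw)
    (fun i _ => by split_ifs <;> linarith)
  have hD₂ : ∀ i, dist b₂ (x i) ≤ r i +
      (if i = v then s / 2 else if i = w then s else 0) := by
    intro i
    by_cases hiC : i ∈ ({v, w} : Finset (Fin m))ᶜ
    · have h1 := hb₂C i hiC
      have h2 : ¬(i = v ∨ i = w) := (hmemc v w i).1 hiC
      rw [if_neg (fun h => h2 (Or.inl h)), if_neg (fun h => h2 (Or.inr h))]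
      linarith
    · have hio : i = v ∨ i = w := by
        by_contra hcon
        exact hiC ((hmemc v w i).2 hcon)
      rcases hio with h | h
      · subst h
        rw [if_pos rfl]
        have hD₁v : (if i = p ∨ i = q ∨ i = u ∨ i = w then s / 2 else 0) = 0 := by
          rw [if_neg]
          simp [hvp, hvq, huv.symm, hvw]
        have h2 := hD₁ i
        rw [hD₁v] at h2
        calc dist b₂ (x i) ≤ dist b₂ b₁ + dist b₁ (x i) := dist_triangle _ _ _
          _ ≤ s / 2 + (r i + 0) := by linarith
          _ = r i + s / 2 := by ring
      · subst h
        rw [if_neg (Ne.symm hvw), if_pos rfl]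
        have hD₁w : (if i = p ∨ i = q ∨ i = u ∨ i = i then s / 2 else 0) = s / 2 := by
          rw [if_pos (by tauto)]
        have h2 := hD₁ i
        rw [hD₁w] at h2
        calc dist b₂ (x i) ≤ dist b₂ b₁ + dist b₁ (x i) := dist_triangle _ _ _
          _ ≤ s / 2 + (r i + s / 2) := by linarith
          _ = r i + s := by ring
  -- Move 3 : unchosen pair {p, q}
  obtain ⟨b₃, hb₃A, hb₃b₂, hb₃C⟩ := move hA x r hr hx hb₂A
    (fun i => if i = v then s / 2 else if i = w then s else 0)
    (fun i => if i = w then s / 2 else 0)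
    hD₂ (fun i => by split_ifs <;> linarith) hs2
    (({p, q} : Finset (Fin m))ᶜ) (hcard p q hpq)
    (fun i _ => by split_ifs <;> linarith)
  have hD₃ : ∀ i, dist b₃ (x i) ≤ r i +
      (if i = p ∨ i = q ∨ i = w then s / 2 else 0) := by
    intro i
    by_cases hiC : i ∈ ({p, q} : Finset (Fin m))ᶜ
    · have h1 := hb₃C i hiC
      by_cases hw : i = w
      · rw [if_pos hw] at h1
        rw [if_pos (by tauto)]
        exact h1
      · rw [if_neg hw] at h1
        split_ifs <;> linarith
    · have hio : i = p ∨ i = q := by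
        by_contra hcon
        exact hiC ((hmemc p q i).2 hcon)
      rw [if_pos (by tauto)]
      have hD₂i : (if i = v then s / 2 else if i = w then s else 0) = 0 := by
        rcases hio with h | h
        · subst h
          rw [if_neg (Ne.symm hvp), if_neg (Ne.symm hwp)]
        · subst h
          rw [if_neg (Ne.symm hvq), if_neg (Ne.symm hwq)]
      have h2 := hD₂ i
      rw [hD₂i] at h2
      calc dist b₃ (x i) ≤ dist b₃ b₂ + dist b₂ (x i) := dist_triangle _ _ _
        _ ≤ s / 2 + (r i + 0) := by linarith
        _ = r i + s / 2 := by ring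
  -- Move 4 : unchosen pair {u, v}
  obtain ⟨b₄, hb₄A, hb₄b₃, hb₄C⟩ := move hA x r hr hx hb₃A
    (fun i => if i = p ∨ i = q ∨ i = w then s / 2 else 0)
    (fun _ => 0) hD₃ (fun _ => le_refl 0) hs2
    (({u, v} : Finset (Fin m))ᶜ) (hcard u v huv)
    (fun i _ => by split_ifs <;> linarith)
  refine ⟨b₄, hb₄A, ?_, ?_⟩
  · calc dist b₄ a ≤ dist b₄ b₃ + dist b₃ a := dist_triangle _ _ _
      _ ≤ dist b₄ b₃ + (dist b₃ b₂ + dist b₂ a) := by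
          linarith [dist_triangle b₃ b₂ a]
      _ ≤ dist b₄ b₃ + (dist b₃ b₂ + (dist b₂ b₁ + dist b₁ a)) := by
          linarith [dist_triangle b₂ b₁ a]
      _ ≤ s / 2 + (s / 2 + (s / 2 + s / 2)) := by linarith
      _ = 2 * s := by ring
  · intro i
    by_cases hiC : i ∈ ({u, v} : Finset (Fin m))ᶜ
    · have h1 := hb₄C i hiC
      have h2 : ¬(i = u ∨ i = v) := (hmemc u v i).1 hiC
      rw [if_neg h2]
      linarith
    · have hio : i = u ∨ i = v := by
        by_contra hcon
        exact hiC ((hmemc u v i).2 hcon)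
      rw [if_pos hio]
      have hD₃i : (if i = p ∨ i = q ∨ i = w then s / 2 else 0) = 0 := by
        rcases hio with h | h <;> subst h <;> rw [if_neg]
        · simp [hup, huq, huw]
        · simp [hvp, hvq, hvw]
      have h2 := hD₃ i
      rw [hD₃i] at h2
      calc dist b₄ (x i) ≤ dist b₄ b₃ + dist b₃ (x i) := dist_triangle _ _ _
        _ ≤ s / 2 + (r i + 0) := by linarith
        _ = r i + s / 2 := by ring

lemma step {n : ℕ} [CompleteSpace X] (hn : 4 ≤ n)
    (hA : IsExternallyNHyperconvex A n) :
    IsExternallyNHyperconvex A (n + 1) := by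
  classical
  intro x r hr hx
  obtain ⟨a₀, ha₀A, ha₀b⟩ := hA (fun i => x i.castSucc) (fun i => r i.castSucc)
    (fun i => hr _) (fun i j => hx _ _)
  have ha₀ : ∀ i : Fin n, dist a₀ (x i.castSucc) ≤ r i.castSucc := by
    intro i
    have := Set.mem_iInter.1 ha₀b i
    rwa [Metric.mem_closedBall] at this
  set L : Fin (n + 1) := Fin.last n with hL
  set t : ℝ := max (dist a₀ (x L) - r L) 0 with ht'
  have ht : 0 ≤ t := le_max_right _ _
  let e0 : Fin (n + 1) := ⟨0, by omega⟩
  let e1 : Fin (n + 1) := ⟨1, by omega⟩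
  let e2 : Fin (n + 1) := ⟨2, by omega⟩
  let e3 : Fin (n + 1) := ⟨3, by omega⟩
  let e4 : Fin (n + 1) := ⟨4, by omega⟩
  let pr : ℕ → Fin (n + 1) × Fin (n + 1) := fun k =>
    if k = 0 then (L, e3) else if k % 2 = 1 then (e0, e1) else (e2, e3)
  let P : ℕ → X → Prop := fun k b => b ∈ A ∧
    ∀ i, dist b (x i) ≤ r i + (if i = (pr k).1 ∨ i = (pr k).2 then t / 2 ^ k else 0)
  have hfin : ∀ a b : Fin (n + 1), (a : ℕ) ≠ (b : ℕ) → a ≠ b :=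
    fun _ _ h => Fin.ne_of_val_ne h
  have hP0 : P 0 a₀ := by
    refine ⟨ha₀A, fun i => ?_⟩
    have hpr0 : pr 0 = (L, e3) := rfl
    rw [hpr0, pow_zero, div_one]
    rcases Fin.eq_castSucc_or_eq_last i with ⟨j, rfl⟩ | rfl
    · have := ha₀ j
      split_ifs <;> linarith
    · show dist a₀ (x L) ≤ r L + (if L = L ∨ L = e3 then t else 0)
      rw [if_pos (Or.inl rfl)]
      have h1 : dist a₀ (x L) - r L ≤ t := le_max_left _ _
      linarith
  have hstep : ∀ k b, P k b → ∃ c, P (k + 1) c ∧ dist c b ≤ 2 * (t / 2 ^ k) := by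
    intro k b hb
    have hdiv : (0 : ℝ) ≤ t / 2 ^ k := div_nonneg ht (by positivity)
    have heq : t / 2 ^ k / 2 = t / 2 ^ (k + 1) := by
      rw [pow_succ]
      ring
    rcases eq_or_ne k 0 with rfl | hk0
    · have hpr0 : pr 0 = (L, e3) := rfl
      have hpr1 : pr 1 = (e0, e1) := rfl
      have hSt0 : ∀ i, dist b (x i) ≤ r i + (if i = L ∨ i = e3 then t / 2 ^ 0 else 0) := by
        intro i
        have := hb.2 i
        rwa [hpr0] at this
      obtain ⟨c, hcA, hcb, hci⟩ := round hA x r hr hx le_rfl (by omega) L e3 e0 e1 e2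
        (hfin _ _ (show n ≠ 3 by omega))
        (hfin _ _ (show 0 ≠ n by omega)) (hfin _ _ (show (0 : ℕ) ≠ 3 by omega))
        (hfin _ _ (show (0 : ℕ) ≠ 2 by omega)) (hfin _ _ (show (0 : ℕ) ≠ 1 by omega))
        (hfin _ _ (show 1 ≠ n by omega)) (hfin _ _ (show (1 : ℕ) ≠ 3 by omega))
        (hfin _ _ (show (1 : ℕ) ≠ 2 by omega))
        (hfin _ _ (show 2 ≠ n by omega)) (hfin _ _ (show (2 : ℕ) ≠ 3 by omega))
        hdiv hb.1 hSt0
      refine ⟨c, ⟨hcA, fun i => ?_⟩, hcb⟩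
      have h2 := hci i
      rw [heq] at h2
      rw [hpr1]
      exact h2
    · rcases Nat.mod_two_eq_zero_or_one k with hk2 | hk2
      · have hprk : pr k = (e2, e3) := by
          simp only [pr]
          rw [if_neg hk0, if_neg (by omega)]
        have hprk1 : pr (k + 1) = (e0, e1) := by
          simp only [pr]
          rw [if_neg (Nat.succ_ne_zero k), if_pos (by omega)]
        have hSt0 : ∀ i, dist b (x i) ≤ r i +
            (if i = e2 ∨ i = e3 then t / 2 ^ k else 0) := by
          intro i
          have := hb.2 i
          rwa [hprk] at this
        obtain ⟨c, hcA, hcb, hci⟩ := round hA x r hr hx le_rfl (by omega) e2 e3 e0 e1 e4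
          (hfin _ _ (show (2 : ℕ) ≠ 3 by omega))
          (hfin _ _ (show (0 : ℕ) ≠ 2 by omega)) (hfin _ _ (show (0 : ℕ) ≠ 3 by omega))
          (hfin _ _ (show (0 : ℕ) ≠ 4 by omega)) (hfin _ _ (show (0 : ℕ) ≠ 1 by omega))
          (hfin _ _ (show (1 : ℕ) ≠ 2 by omega)) (hfin _ _ (show (1 : ℕ) ≠ 3 by omega))
          (hfin _ _ (show (1 : ℕ) ≠ 4 by omega))
          (hfin _ _ (show (4 : ℕ) ≠ 2 by omega)) (hfin _ _ (show (4 : ℕ) ≠ 3 by omega))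
          hdiv hb.1 hSt0
        refine ⟨c, ⟨hcA, fun i => ?_⟩, hcb⟩
        have h2 := hci i
        rw [heq] at h2
        rw [hprk1]
        exact h2
      · have hprk : pr k = (e0, e1) := by
          simp only [pr]
          rw [if_neg hk0, if_pos hk2]
        have hprk1 : pr (k + 1) = (e2, e3) := by
          simp only [pr]
          rw [if_neg (Nat.succ_ne_zero k), if_neg (by omega)]
        have hSt0 : ∀ i, dist b (x i) ≤ r i +
            (if i = e0 ∨ i = e1 then t / 2 ^ k else 0) := by
          intro i
          have := hb.2 i
          rwa [hprk] at this
        obtain ⟨c, hcA, hcb, hci⟩ := round hA x r hr hx le_rfl (by omega) e0 e1 e2 e3 e4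
          (hfin _ _ (show (0 : ℕ) ≠ 1 by omega))
          (hfin _ _ (show (2 : ℕ) ≠ 0 by omega)) (hfin _ _ (show (2 : ℕ) ≠ 1 by omega))
          (hfin _ _ (show (2 : ℕ) ≠ 4 by omega)) (hfin _ _ (show (2 : ℕ) ≠ 3 by omega))
          (hfin _ _ (show (3 : ℕ) ≠ 0 by omega)) (hfin _ _ (show (3 : ℕ) ≠ 1 by omega))
          (hfin _ _ (show (3 : ℕ) ≠ 4 by omega))
          (hfin _ _ (show (4 : ℕ) ≠ 0 by omega)) (hfin _ _ (show (4 : ℕ) ≠ 1 by omega))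
          hdiv hb.1 hSt0
        refine ⟨c, ⟨hcA, fun i => ?_⟩, hcb⟩
        have h2 := hci i
        rw [heq] at h2
        rw [hprk1]
        exact h2
  let seq : ∀ k : ℕ, {b : X // P k b} := fun k =>
    Nat.rec (motive := fun k => {b : X // P k b}) ⟨a₀, hP0⟩
      (fun k ih => ⟨(hstep k ih.1 ih.2).choose, (hstep k ih.1 ih.2).choose_spec.1⟩) k
  have hseq : ∀ k, dist (seq (k + 1)).1 (seq k).1 ≤ 2 * (t / 2 ^ k) := fun k =>
    (hstep k (seq k).1 (seq k).2).choose_spec.2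
  have hcauchy : CauchySeq fun k => (seq k).1 := by
    apply cauchySeq_of_le_geometric (1 / 2 : ℝ) (2 * t) (by norm_num)
    intro k
    rw [dist_comm]
    calc dist (seq (k + 1)).1 (seq k).1 ≤ 2 * (t / 2 ^ k) := hseq k
      _ = 2 * t * (1 / 2) ^ k := by
          rw [div_pow, one_pow]
          ring
  obtain ⟨b, hb⟩ := cauchySeq_tendsto_of_complete hcauchy
  have hclosed : IsClosed A := hc_closed (by omega) hA
  have hbA : b ∈ A := hclosed.mem_of_tendsto hb
    (Filter.Eventually.of_forall fun k => (seq k).2.1)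
  refine ⟨b, hbA, Set.mem_iInter.2 fun i => Metric.mem_closedBall.2 ?_⟩
  have h1 : Filter.Tendsto (fun k => dist (seq k).1 (x i)) Filter.atTop
      (nhds (dist b (x i))) := hb.dist tendsto_const_nhds
  have h0 : Filter.Tendsto (fun k : ℕ => t / 2 ^ k) Filter.atTop (nhds 0) := by
    have h2 : Filter.Tendsto (fun k : ℕ => t * (1 / 2 : ℝ) ^ k) Filter.atTop
        (nhds (t * 0)) :=
      (tendsto_pow_atTop_nhds_zero_of_lt_one (by norm_num) (by norm_num)).const_mul t
    rw [mul_zero] at h2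
    have hfun : (fun k : ℕ => t / 2 ^ k) = fun k : ℕ => t * (1 / 2 : ℝ) ^ k := by
      funext k
      rw [div_pow, one_pow]
      ring
    rw [hfun]
    exact h2
  have h2 : Filter.Tendsto (fun k : ℕ => r i + t / 2 ^ k) Filter.atTop (nhds (r i)) := by
    have := h0.const_add (r i)
    rwa [add_zero] at this
  refine le_of_tendsto_of_tendsto' h1 h2 fun k => ?_
  have h3 := (seq k).2.2 i
  have h4 : (0 : ℝ) ≤ t / 2 ^ k := div_nonneg ht (by positivity)
  split_ifs at h3 <;> linarith

end ExtHCAux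

theorem isExternallyNHyperconvex_four_iff_forall (X : Type*) [MetricSpace X] [CompleteSpace X]
    (A : Set X) (hA : A.Nonempty) :
    IsExternallyNHyperconvex A 4 ↔ ∀ n : ℕ, 0 < n → IsExternallyNHyperconvex A n := by
  constructor
  · intro h4 n hn
    rcases le_or_gt n 4 with h | h
    · exact ExtHCAux.hc_mono h4 hn h
    · have key : ∀ k : ℕ, IsExternallyNHyperconvex A (4 + k) := by
        intro k
        induction k with
        | zero => exact h4
        | succ k ih => exact ExtHCAux.step (n := 4 + k) (Nat.le_add_right 4 k) ih
      have := key (n - 4)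
      rwa [show 4 + (n - 4) = n by omega] at this
  · intro h
    exact h 4 (by norm_num)
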